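/- Let H be a complex Hilbert space and let P be a bounded linear operator on H whose range is a closed subspace of H. Then there exists c > 0 such that the spectrum of the positive operator P*∘P contains no point of the open interval (0, c); that is, 0 is either not in the spectrum of P*∘P or is an isolated point of it. -/

import Mathlib

set_option maxHeartbeats 1000000

open ContinuousLinearMap Submodule RCLike
open scoped ComplexInnerProductSpace

theorem closed_range_spectrum_gap {H : Type*} [NormedAddCommGroup H]
    [InnerProductSpace ℂ H] [CompleteSpace H]
    (P : H →L[ℂ] H) (hP : IsClosed (Set.range P)) :
    ∃ c : ℝ, 0 < c ∧ ∀ x : ℝ, 0 < x → x < c →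
      (x : ℂ) ∉ spectrum ℂ (ContinuousLinearMap.adjoint P * P) := by
  classical
  set T := ContinuousLinearMap.adjoint P * P with hTdef
  set K := LinearMap.ker (P : H →ₗ[ℂ] H) with hKdef
  haveI : CompleteSpace K := P.isClosed_ker.completeSpace_coe
  haveI hRc : CompleteSpace (LinearMap.range (P : H →ₗ[ℂ] H)) := by
    have : IsClosed ((LinearMap.range (P : H →ₗ[ℂ] H) : Submodule ℂ H) : Set H) := by
      rw [LinearMap.coe_range]; exact hP
    exact this.completeSpace_coe
  -- Step 1: P is bounded below on Kᗮ
  obtain ⟨c, hc, hbound⟩ : ∃ c : ℝ, 0 < c ∧ ∀ u ∈ Kᗮ, c * ‖u‖ ≤ ‖P u‖ := by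
    set Q : Kᗮ →L[ℂ] (LinearMap.range (P : H →ₗ[ℂ] H)) :=
      (P.comp (Kᗮ).subtypeL).codRestrict (LinearMap.range (P : H →ₗ[ℂ] H))
        (fun u => LinearMap.mem_range_self _ _) with hQdef
    have hker : LinearMap.ker (Q : Kᗮ →ₗ[ℂ] (LinearMap.range (P : H →ₗ[ℂ] H))) = ⊥ := by
      rw [LinearMap.ker_eq_bot']
      intro u hu
      have h1 : P (u : H) = 0 := by
        have := congrArg (Subtype.val) hu
        exact this
      have h2 : (u : H) ∈ K := h1
      have := u.2
      ext
      exact inner_self_eq_zero.mp (u.2 (u : H) h2)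
    have hrange : LinearMap.range (Q : Kᗮ →ₗ[ℂ] (LinearMap.range (P : H →ₗ[ℂ] H))) = ⊤ := by
      rw [LinearMap.range_eq_top]
      rintro ⟨y, u, rfl⟩
      refine ⟨⟨u - (orthogonalProjection K u : H),
        K.sub_starProjection_mem_orthogonal u⟩, ?_⟩
      ext
      have : P ((orthogonalProjection K u : H)) = 0 := (orthogonalProjection K u).2
      show P (u - (orthogonalProjection K u : H)) = P u
      rw [map_sub, this, sub_zero]
    let e : Kᗮ ≃L[ℂ] (LinearMap.range (P : H →ₗ[ℂ] H)) := ContinuousLinearEquiv.ofBijective Q hker hrange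
    obtain ⟨C, hC⟩ : ∃ C : NNReal, AntilipschitzWith C Q := ⟨_, e.antilipschitz⟩
    refine ⟨((C : ℝ) + 1)⁻¹, by positivity, fun u hu => ?_⟩
    have h1 : ‖(⟨u, hu⟩ : Kᗮ)‖ ≤ (C : ℝ) * ‖Q ⟨u, hu⟩‖ := by
      simpa using hC.le_mul_dist ⟨u, hu⟩ 0
    have h2 : ‖Q ⟨u, hu⟩‖ = ‖P u‖ := rfl
    have h3 : ‖(⟨u, hu⟩ : Kᗮ)‖ = ‖u‖ := rfl
    rw [h2, h3] at h1
    rw [inv_mul_le_iff₀ (by positivity)]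
    have : (C : ℝ) * ‖P u‖ ≤ ((C : ℝ) + 1) * ‖P u‖ := by nlinarith [norm_nonneg (P u)]
    linarith
  refine ⟨c ^ 2, by positivity, fun x hx hxc hmem => ?_⟩
  set S : H →L[ℂ] H := T - (x : ℂ) • 1 with hSdef
  have hTsa : IsSelfAdjoint T := by
    rw [IsSelfAdjoint, hTdef, star_mul, ContinuousLinearMap.star_eq_adjoint,
      ContinuousLinearMap.star_eq_adjoint, adjoint_adjoint]
  have hSsa : IsSelfAdjoint S := by
    refine hTsa.sub ?_
    rw [IsSelfAdjoint]
    simp [star_smul, Complex.star_def, Complex.conj_ofReal]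
  -- T u only depends on the Kᗮ-component, and maps into Kᗮ
  have hTmem : ∀ v : H, T v ∈ Kᗮ := by
    intro v
    intro w hw
    have hw' : P w = 0 := hw
    calc ⟪w, T v⟫ = ⟪w, ContinuousLinearMap.adjoint P (P v)⟫ := rfl
      _ = ⟪P w, P v⟫ := adjoint_inner_right _ _ _
      _ = 0 := by rw [hw']; simp
  set δ := min x (c ^ 2 - x) with hδdef
  have hδ : 0 < δ := lt_min hx (by linarith)
  -- the key lower bound
  have hlow : ∀ u : H, δ * ‖u‖ ≤ ‖S u‖ := by
    intro u
    set u₀ : H := (orthogonalProjection K u : H) with hu₀def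
    set u₁ : H := u - u₀ with hu₁def
    have hu₀ : u₀ ∈ K := (orthogonalProjection K u).2
    have hu₁ : u₁ ∈ Kᗮ := K.sub_starProjection_mem_orthogonal u
    have hu : u = u₀ + u₁ := by rw [hu₁def]; abel
    have hPu₀ : P u₀ = 0 := hu₀
    have hTu : T u = T u₁ := by
      rw [hu]
      have : T u₀ = 0 := by
        show ContinuousLinearMap.adjoint P (P u₀) = 0
        rw [hPu₀, map_zero]
      rw [map_add, this, zero_add]
    set a : H := T u₁ - (x : ℂ) • u₁ with hadef
    set b : H := (x : ℂ) • u₀ with hbdef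
    have hSu : S u = a - b := by
      rw [hSdef, hadef, hbdef]
      simp only [ContinuousLinearMap.sub_apply, ContinuousLinearMap.smul_apply,
        ContinuousLinearMap.one_apply, hTu]
      rw [hu, smul_add]
      abel
    have ha : a ∈ Kᗮ := Submodule.sub_mem _ (hTmem u₁) (Submodule.smul_mem _ _ hu₁)
    have hb : b ∈ K := Submodule.smul_mem _ _ hu₀
    have hinner_ab : ⟪a, b⟫ = 0 :=
      Submodule.inner_left_of_mem_orthogonal hb ha
    -- ‖S u‖² = ‖a‖² + ‖b‖²
    have hnorm_split : ‖S u‖ ^ 2 = ‖a‖ ^ 2 + ‖b‖ ^ 2 := by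
      rw [hSu, @norm_sub_sq ℂ, hinner_ab]
      simp
    -- ‖b‖ = x * ‖u₀‖
    have hnb : ‖b‖ = x * ‖u₀‖ := by
      rw [hbdef, norm_smul, Complex.norm_real, Real.norm_eq_abs, abs_of_pos hx]
    -- ‖a‖ ≥ (c² - x) ‖u₁‖
    have hna : (c ^ 2 - x) * ‖u₁‖ ≤ ‖a‖ := by
      have hre : Complex.re ⟪a, u₁⟫ = ‖P u₁‖ ^ 2 - x * ‖u₁‖ ^ 2 := by
        have h1 : ⟪T u₁, u₁⟫ = ⟪P u₁, P u₁⟫ := by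
          calc ⟪T u₁, u₁⟫ = ⟪ContinuousLinearMap.adjoint P (P u₁), u₁⟫ := rfl
            _ = ⟪P u₁, P u₁⟫ := adjoint_inner_left _ _ _
        have h2 : ⟪P u₁, P u₁⟫ = ((‖P u₁‖ ^ 2 : ℝ) : ℂ) := by
          rw [inner_self_eq_norm_sq_to_K]; norm_cast
        have h3 : ⟪u₁, u₁⟫ = ((‖u₁‖ ^ 2 : ℝ) : ℂ) := by
          rw [inner_self_eq_norm_sq_to_K]; norm_cast
        rw [hadef, inner_sub_left, inner_smul_left, h1, h2, h3, Complex.conj_ofReal]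
        rw [← Complex.ofReal_mul, ← Complex.ofReal_sub, Complex.ofReal_re]
      have hcs : Complex.re ⟪a, u₁⟫ ≤ ‖a‖ * ‖u₁‖ := by
        calc Complex.re ⟪a, u₁⟫ ≤ ‖⟪a, u₁⟫‖ := RCLike.re_le_norm (K := ℂ) _
          _ ≤ ‖a‖ * ‖u₁‖ := norm_inner_le_norm _ _
      have hPu₁ : c * ‖u₁‖ ≤ ‖P u₁‖ := hbound u₁ hu₁
      have hPu₁sq : c ^ 2 * ‖u₁‖ ^ 2 ≤ ‖P u₁‖ ^ 2 := by
        have h5 := pow_le_pow_left₀ (by positivity) hPu₁ 2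
        calc c ^ 2 * ‖u₁‖ ^ 2 = (c * ‖u₁‖) ^ 2 := by ring
          _ ≤ ‖P u₁‖ ^ 2 := h5
      rcases eq_or_lt_of_le (norm_nonneg u₁) with h0 | h0
      · rw [← h0]; simp [norm_nonneg]
      · have h4 : (c ^ 2 - x) * ‖u₁‖ * ‖u₁‖ ≤ ‖a‖ * ‖u₁‖ := by nlinarith
        exact le_of_mul_le_mul_right h4 h0
    -- ‖u‖² = ‖u₀‖² + ‖u₁‖²
    have hnu : ‖u‖ ^ 2 = ‖u₀‖ ^ 2 + ‖u₁‖ ^ 2 := by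
      rw [hu, @norm_add_sq ℂ]
      rw [Submodule.inner_right_of_mem_orthogonal hu₀ hu₁]
      simp
    have hδx : δ ≤ x := min_le_left _ _
    have hδcx : δ ≤ c ^ 2 - x := min_le_right _ _
    have key : (δ * ‖u‖) ^ 2 ≤ ‖S u‖ ^ 2 := by
      rw [hnorm_split, hnb, mul_pow, hnu]
      have h6 : δ * ‖u₁‖ ≤ ‖a‖ := le_trans (by nlinarith [norm_nonneg u₁]) hna
      have h7 : (δ * ‖u₁‖) ^ 2 ≤ ‖a‖ ^ 2 := pow_le_pow_left₀ (by positivity) h6 2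
      have h8 : (δ * ‖u₀‖) ^ 2 ≤ (x * ‖u₀‖) ^ 2 :=
        pow_le_pow_left₀ (by positivity) (by nlinarith [norm_nonneg u₀]) 2
      nlinarith [h7, h8]
    exact (pow_le_pow_iff_left₀ (by positivity) (norm_nonneg _) two_ne_zero).mp key
  -- antilipschitz
  obtain ⟨C, hanti⟩ : ∃ C : NNReal, AntilipschitzWith C S := by
    refine ⟨⟨δ⁻¹, by positivity⟩, S.antilipschitz_of_bound fun u => ?_⟩
    show ‖u‖ ≤ δ⁻¹ * ‖S u‖
    rw [← div_eq_inv_mul, le_div_iff₀ hδ]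
    calc ‖u‖ * δ = δ * ‖u‖ := by ring
      _ ≤ ‖S u‖ := hlow u
  -- dense range
  have hdense : (LinearMap.range (S : H →ₗ[ℂ] H)).topologicalClosure = ⊤ := by
    rw [Submodule.topologicalClosure_eq_top_iff, Submodule.eq_bot_iff]
    intro v hv
    have hSv : S v = 0 := by
      have h1 : ⟪S v, S v⟫ = 0 := by
        have h2 : ⟪S (S v), v⟫ = 0 := hv (S (S v)) (LinearMap.mem_range_self _ _)
        calc ⟪S v, S v⟫ = ⟪S v, (ContinuousLinearMap.adjoint S) v⟫ := by
              rw [hSsa.adjoint_eq]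
          _ = ⟪S (S v), v⟫ := adjoint_inner_right _ _ _
          _ = 0 := h2
      exact inner_self_eq_zero.mp h1
    have := hanti.injective
    have h0 : S 0 = 0 := map_zero S
    exact this (by rw [hSv, h0])
  have hbij : Function.Bijective S :=
    (S.bijective_iff_dense_range_and_antilipschitz).mpr ⟨hdense, _, hanti⟩
  have hunit : IsUnit S := isUnit_iff_bijective.mpr hbij
  rw [spectrum.mem_iff] at hmem
  apply hmem
  have : algebraMap ℂ (H →L[ℂ] H) (x : ℂ) - T = -S := by
    rw [hSdef, Algebra.algebraMap_eq_smul_one]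
    abel
  rw [this]
  exact hunit.neg
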